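/- Assume T has the f.s. dichotomy. If tp(ā/Mc) and tp(c/Mb̄) are not finitely satisfiable in M (c a singleton), then tp(ā/Mb̄) is not finitely satisfiable in M. -/

import Mathlib

open FirstOrder FirstOrder.Language Cardinal Set

universe u v w

namespace MonadicNIP

variable {L : FirstOrder.Language.{u, u}} {C : Type u} [L.Structure C]

/-- The complete type of the tuple `a` over the parameter set `B`:
all formulas with parameters from `B` and variables `α` satisfied by `a`. -/
def tpSet {α : Type v} (B : Set C) (a : α → C) : Set (L.Formula (B ⊕ α)) :=
  {φ | φ.Realize (Sum.elim (Subtype.val : B → C) a)}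

/-- A set of formulas over `B` (a "type") is finitely satisfied in `M` if each of
its formulas is realized by a tuple from `M`. -/
def FinSat (M : Set C) {α : Type v} {B : Set C} (p : Set (L.Formula (B ⊕ α))) : Prop :=
  ∀ φ ∈ p, ∃ m : α → C, (∀ i, m i ∈ M) ∧
    Formula.Realize φ (Sum.elim (Subtype.val : B → C) m)

/-- `p` is a complete type over `B` (in the monster `C`): finitely satisfiable
in `C` and deciding every formula. -/
def IsCompleteType {α : Type v} (B : Set C) (p : Set (L.Formula (B ⊕ α))) : Prop :=
  (∀ s : Finset (L.Formula (B ⊕ α)), ↑s ⊆ p →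
      ∃ a : α → C, ∀ φ ∈ s, Formula.Realize φ (Sum.elim (Subtype.val : B → C) a)) ∧
    ∀ φ : L.Formula (B ⊕ α), φ ∈ p ∨ φ.not ∈ p

/-- `tp(A/B)` is finitely satisfied in `M` (formulated without an enumeration of `A`). -/
def SetFinSat (L : FirstOrder.Language.{u, u}) {C : Type u} [L.Structure C] (M B A : Set C) : Prop :=
  ∀ (n : ℕ) (φ : L.Formula (B ⊕ Fin n)) (a : Fin n → C), (∀ i, a i ∈ A) →
    φ.Realize (Sum.elim (Subtype.val : B → C) a) →
    ∃ m : Fin n → C, (∀ i, m i ∈ M) ∧ φ.Realize (Sum.elim (Subtype.val : B → C) m)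

/-- `⟨A i : i ∈ I⟩` is an `M`-f.s. sequence over `B`. -/
def IsFSSeq (L : FirstOrder.Language.{u, u}) {C : Type u} [L.Structure C] (M B : Set C) {I : Type v} [LinearOrder I] (A : I → Set C) : Prop :=
  ∀ i : I, SetFinSat L M (B ∪ ⋃ j < i, A j) (A i)

/-- The average type of an ultrafilter `U` on `M^n` over the parameter set `B`. -/
def Av {n : ℕ} {M : Set C} (U : Ultrafilter (Fin n → M)) (B : Set C) :
    Set (L.Formula (B ⊕ Fin n)) :=
  {φ | {m : Fin n → M |
      Formula.Realize φ (Sum.elim (Subtype.val : B → C) (fun i => (m i : C)))} ∈ U}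

/-- `C0` is full (for non-splitting over `M`): every complete type over `M`
in finitely many variables (realized in the monster) is realized in `C0`. -/
def IsFull (L : FirstOrder.Language.{u, u}) {C : Type u} [L.Structure C] (M C0 : Set C) : Prop :=
  ∀ (n : ℕ) (a : Fin n → C), ∃ c : Fin n → C, (∀ i, c i ∈ C0) ∧
    tpSet (L := L) M a = tpSet (L := L) M c

/-- The sequence of tuples `a` is indiscernible over `B`. -/
def IndiscernibleOver (L : FirstOrder.Language.{u, u}) {C : Type u} [L.Structure C] {I : Type v} [LinearOrder I] {α : Type w} (B : Set C)
    (a : I → α → C) : Prop :=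
  ∀ (n : ℕ) (i j : Fin n → I), StrictMono i → StrictMono j →
    tpSet (L := L) B (fun p : Fin n × α => a (i p.1) p.2) =
      tpSet (L := L) B (fun p : Fin n × α => a (j p.1) p.2)

/-- The type `p` over `B` does not split over `M0`: parameter tuples from `B`
with the same type over `M0` are interchangeable in `p`. -/
def NotSplitOver (M0 : Set C) {B : Set C} {α : Type v}
    (p : Set (L.Formula (B ⊕ α))) : Prop :=
  ∀ (k : ℕ) (b b' : Fin k → B) (φ : L.Formula (Fin k ⊕ α)),
    tpSet (L := L) M0 (fun i => (b i : C)) = tpSet (L := L) M0 (fun i => (b' i : C)) →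
    (φ.relabel (Sum.elim (fun i => Sum.inl (b i)) Sum.inr) ∈ p ↔
      φ.relabel (Sum.elim (fun i => Sum.inl (b' i)) Sum.inr) ∈ p)


/-- The theory of `C` has the f.s. dichotomy: for every model `M ⪯ C`, finite tuples
`ā`, `b̄` with `tp(b̄/Mā)` finitely satisfied in `M`, and singleton `c`, either
`tp(b̄/Māc)` or `tp(b̄c/Mā)` is finitely satisfied in `M`. -/
def FSDichotomy (L : FirstOrder.Language.{u, u}) (C : Type u) [L.Structure C] : Prop :=
  ∀ (M : L.ElementarySubstructure C) (k l : ℕ) (a : Fin k → C) (b : Fin l → C) (c : C),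
    FinSat (M : Set C) (tpSet (L := L) ((M : Set C) ∪ Set.range a) b) →
    (FinSat (M : Set C) (tpSet (L := L) ((M : Set C) ∪ Set.range a ∪ {c}) b) ∨
      FinSat (M : Set C) (tpSet (L := L) ((M : Set C) ∪ Set.range a) (Fin.snoc b c)))

lemma finSat_mono {M B B' : Set C} {α : Type v} (hBB : B ⊆ B') (a : α → C)
    (h : FinSat (L := L) M (tpSet (L := L) B' a)) :
    FinSat (L := L) M (tpSet (L := L) B a) := by
  intro φ hφ
  set g : B ⊕ α → B' ⊕ α := Sum.map (Set.inclusion hBB) id with hg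
  have hc : ∀ v : α → C,
      (Sum.elim (Subtype.val : B' → C) v) ∘ g = Sum.elim (Subtype.val : B → C) v := by
    intro v; funext x; cases x <;> rfl
  have hmem : φ.relabel g ∈ tpSet (L := L) B' a := by
    show (φ.relabel g).Realize _
    rw [Formula.realize_relabel, hc]
    exact hφ
  obtain ⟨m, hm, hreal⟩ := h _ hmem
  refine ⟨m, hm, ?_⟩
  rw [Formula.realize_relabel, hc] at hreal
  exact hreal

lemma finSat_single {M B : Set C} {k : ℕ} {a : Fin k → C} {c : C}
    (h : FinSat (L := L) M (tpSet (L := L) B (Fin.snoc a c))) :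
    FinSat (L := L) M (tpSet (L := L) B (fun _ : Fin 1 => c)) := by
  intro φ hφ
  set g : B ⊕ Fin 1 → B ⊕ Fin (k + 1) := Sum.map id (fun _ => Fin.last k) with hg
  have hc : ∀ v : Fin (k + 1) → C,
      (Sum.elim (Subtype.val : B → C) v) ∘ g =
        Sum.elim (Subtype.val : B → C) (fun _ : Fin 1 => v (Fin.last k)) := by
    intro v; funext x; cases x <;> rfl
  have hmem : φ.relabel g ∈ tpSet (L := L) B (Fin.snoc a c) := by
    show (φ.relabel g).Realize _
    rw [Formula.realize_relabel, hc]
    simpa [Fin.snoc_last, tpSet] using hφ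
  obtain ⟨m, hm, hreal⟩ := h _ hmem
  refine ⟨fun _ => m (Fin.last k), fun _ => hm _, ?_⟩
  rw [Formula.realize_relabel, hc] at hreal
  exact hreal

/-- If `T` has the f.s. dichotomy and `tp(ā/Mc)`, `tp(c/Mb̄)` are not
finitely satisfiable in `M` (`c` a singleton), then neither is `tp(ā/Mb̄)`. -/
theorem statement16 (h : FSDichotomy L C) (M : L.ElementarySubstructure C)
    (k l : ℕ) (a : Fin k → C) (b : Fin l → C) (c : C)
    (h1 : ¬ FinSat (M : Set C) (tpSet (L := L) ((M : Set C) ∪ {c}) a))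
    (h2 : ¬ FinSat (M : Set C)
        (tpSet (L := L) ((M : Set C) ∪ Set.range b) (fun _ : Fin 1 => c))) :
    ¬ FinSat (M : Set C) (tpSet (L := L) ((M : Set C) ∪ Set.range b) a) := by
  intro hfs
  rcases h M l k b a c hfs with h3 | h3
  · refine h1 (finSat_mono ?_ a h3)
    intro x hx
    rcases hx with hx | hx
    · exact Or.inl (Or.inl hx)
    · exact Or.inr hx
  · exact h2 (finSat_single h3)

end MonadicNIP
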